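/- Let f, g ∈ R⟨X⟩ be uniformly compatible with a labelled quiver Q and suppose fg ≠ 0. Then for every pair of vertices (u, w) with fg ∈ R⟨X⟩_{u,w} there exists a vertex v ∈ V lying on some path in Q from u to w such that f ∈ R⟨X⟩_{v,w} and g ∈ R⟨X⟩_{u,v}. -/

import Mathlib

open scoped BigOperators

/-- The free `R`-algebra `R⟨X⟩` on `X`, as the monoid algebra over `R`
of the free monoid `⟨X⟩` of words over `X`. -/
abbrev FreeAlg (R X : Type*) [CommRing R] := MonoidAlgebra R (FreeMonoid X)

/-- A labelled quiver `Q = (V, E, X, s, t, l)`: a directed multigraph with vertex set `V`,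
edge set `E`, source and target maps `s, t : E → V` and labelling `l : E → X`. -/
structure LabelledQuiver (V E X : Type*) where
  src : E → V
  tgt : E → V
  lab : E → X

/-- Paths in a labelled quiver `Q`; `LQPath Q u w` is the type of paths with source `u` and
target `w`.  `nil v` is the empty path at `v`; `cons e p` appends the edge `e` after `p`. -/
inductive LQPath {V E X : Type*} (Q : LabelledQuiver V E X) : V → V → Type _ where
  | nil (v : V) : LQPath Q v v
  | cons {u : V} (e : E) (p : LQPath Q u (Q.src e)) : LQPath Q u (Q.tgt e)

namespace LQPath
variable {V E X : Type*} {Q : LabelledQuiver V E X}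
/-- The label `l(p) = l(eₙ)⋯l(e₁) ∈ ⟨X⟩` of a path; the empty path has label `1`. -/
def label : {u w : V} → LQPath Q u w → FreeMonoid X
  | _, _, .nil _ => 1
  | _, _, .cons e p => FreeMonoid.of (Q.lab e) * p.label
end LQPath

namespace LabelledQuiver

variable {V E X : Type*} (Q : LabelledQuiver V E X)

/-- The set of signatures `σ(m) = {(s(p), t(p)) : p a path in Q with l(p) = m}`. -/
def sigmaM (m : FreeMonoid X) : Set (V × V) :=
  {vw | ∃ p : LQPath Q vw.1 vw.2, p.label = m}

variable {R : Type*} [CommRing R]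

/-- The set of signatures `σ(f) = ⋂_{m ∈ supp(f)} σ(m)` of a polynomial. -/
def sigmaP (f : FreeAlg R X) : Set (V × V) :=
  ⋂ m ∈ (f.coeff : FreeMonoid X →₀ R).support, Q.sigmaM m

/-- `f` is compatible with `Q` if `σ(f) ≠ ∅`. -/
def Compatible (f : FreeAlg R X) : Prop :=
  (Q.sigmaP f).Nonempty

/-- `f` is uniformly compatible with `Q` if it is compatible and all monomials in its
support have the same set of signatures. -/
def UniformlyCompatible (f : FreeAlg R X) : Prop :=
  Q.Compatible f ∧
    ∀ m ∈ (f.coeff : FreeMonoid X →₀ R).support, ∀ m' ∈ (f.coeff : FreeMonoid X →₀ R).support,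
      Q.sigmaM m = Q.sigmaM m'

/-- The set of sources `s(f)` of a polynomial: the projection of `σ(f)` to the first
component. -/
def srcSet (f : FreeAlg R X) : Set V := Prod.fst '' Q.sigmaP f

/-- The set of targets `t(f)` of a polynomial: the projection of `σ(f)` to the second
component. -/
def tgtSet (f : FreeAlg R X) : Set V := Prod.snd '' Q.sigmaP f

end LabelledQuiver

namespace LQPath
variable {V E X : Type*} {Q : LabelledQuiver V E X}
@[simp] lemma label_nil' (v : V) : (LQPath.nil (Q := Q) v).label = 1 := by rw [LQPath.label]
@[simp] lemma label_cons' (e : E) {u : V} (p : LQPath Q u (Q.src e)) :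
    (LQPath.cons e p).label = FreeMonoid.of (Q.lab e) * p.label := by rw [LQPath.label]
end LQPath

lemma split_path {V E X : Type*} {Q : LabelledQuiver V E X} :
    ∀ {u w : V} (p : LQPath Q u w) (a b : FreeMonoid X), p.label = a * b →
    ∃ (v : V) (r : LQPath Q v w) (q : LQPath Q u v), r.label = a ∧ q.label = b := by
  intro u w p
  induction p with
  | nil =>
    intro a b h
    have h1 : ([] : List X) = a.toList ++ b.toList := by
      simpa using congrArg FreeMonoid.toList h
    obtain ⟨ha, hb⟩ := List.append_eq_nil_iff.mp h1.symm
    have ha' : a = 1 := FreeMonoid.toList.injective ha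
    have hb' : b = 1 := FreeMonoid.toList.injective hb
    exact ⟨u, .nil u, .nil u, by simp [ha'], by simp [hb']⟩
  | cons e p ih =>
    intro a b h
    induction a using FreeMonoid.casesOn with
    | one =>
      exact ⟨Q.tgt e, .nil _, .cons e p, by simp, by simpa using h⟩
    | of_mul x a' =>
      have h' : Q.lab e :: p.label.toList = x :: (a' * b).toList := by
        simpa [mul_assoc] using congrArg FreeMonoid.toList h
      have hx : Q.lab e = x := (List.cons.injEq _ _ _ _ ▸ h').1
      have hrest : p.label = a' * b :=
        FreeMonoid.toList.injective (List.cons.injEq _ _ _ _ ▸ h').2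
      obtain ⟨v, r, q, hr, hq⟩ := ih a' b hrest
      exact ⟨v, .cons e r, q, by simp [hr, hx], hq⟩

/-- If `f, g` are uniformly compatible with `Q` and `f·g ≠ 0`, then for every
`(u, w)` with `f·g ∈ R⟨X⟩_{u,w}` there is a vertex `v` lying on some path from `u` to `w`
(i.e. there is a path from `u` to `v` and a path from `v` to `w`) such that
`f ∈ R⟨X⟩_{v,w}` and `g ∈ R⟨X⟩_{u,v}`. -/
theorem factor_signature {R V E X : Type*} [CommRing R] (Q : LabelledQuiver V E X)
    (f g : FreeAlg R X) (hf : Q.UniformlyCompatible f) (hg : Q.UniformlyCompatible g)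
    (hne : f * g ≠ 0) (u w : V) (huw : (u, w) ∈ Q.sigmaP (f * g)) :
    ∃ v : V, Nonempty (LQPath Q u v) ∧ Nonempty (LQPath Q v w) ∧
      (v, w) ∈ Q.sigmaP f ∧ (u, v) ∈ Q.sigmaP g := by
  classical
  obtain ⟨m, hm⟩ := Finsupp.support_nonempty_iff.mpr (mt MonoidAlgebra.coeff_eq_zero.mp hne)
  have hsub := MonoidAlgebra.support_coeff_mul_subset f g hm
  obtain ⟨mf, hmf, mg, hmg, rfl⟩ := Finset.mem_mul.mp hsub
  have hpm : (u, w) ∈ Q.sigmaM (mf * mg) := by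
    have := Set.mem_iInter₂.mp huw (mf * mg) hm
    exact this
  obtain ⟨p, hp⟩ := hpm
  obtain ⟨v, r, q, hr, hq⟩ := split_path p mf mg hp
  refine ⟨v, ⟨q⟩, ⟨r⟩, ?_, ?_⟩
  · refine Set.mem_iInter₂.mpr fun m' hm' => ?_
    rw [hf.2 m' hm' mf hmf]
    exact ⟨r, hr⟩
  · refine Set.mem_iInter₂.mpr fun m' hm' => ?_
    rw [hg.2 m' hm' mg hmg]
    exact ⟨q, hq⟩
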